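/- arXiv:1510.02258 — 4 statements merged into one kernel-verified Lean document; each statement's English description precedes it below -/
import Mathlib

section
/- Let (A, E) be an exact category and X a full additive subcategory. If A →f B →g C is a conflation with f X-monic, and α : A → A' is any morphism, then in the pushout conflation A' →f' B' →g' C (obtained by pushing out along α) the inflation f' is again X-monic. Moreover, g' is X-epic whenever g is X-epic. -/
open CategoryTheory CategoryTheory.Limits

universe v u

/-- `f : A ⟶ B` is `X`-monic. -/
def XMonic {C : Type u} [Category.{v} C] (P : C → Prop) {A B : C}
    (f : A ⟶ B) : Prop :=
  ∀ (X' : C), P X' → ∀ (x : A ⟶ X'), ∃ t : B ⟶ X', f ≫ t = x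

/-- `g : B ⟶ C` is `X`-epic. -/
def XEpic {C : Type u} [Category.{v} C] (P : C → Prop) {A B : C}
    (f : A ⟶ B) : Prop :=
  ∀ (X' : C), P X' → ∀ (x : X' ⟶ B), ∃ t : X' ⟶ A, t ≫ f = x

theorem stmt_11 {𝒜 : Type u} [Category.{v} 𝒜] [Preadditive 𝒜]
    (P : 𝒜 → Prop)
    {A B C A' B' : 𝒜}
    (f : A ⟶ B) (g : B ⟶ C) (hf : XMonic P f)
    (α : A ⟶ A') (f' : A' ⟶ B') (β : B ⟶ B') (g' : B' ⟶ C)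
    (hpo : IsPushout f α β f')
    (hg : g = β ≫ g') :
    XMonic P f' ∧ (XEpic P g → XEpic P g') := by
  constructor
  · intro X' hX' x
    obtain ⟨t, ht⟩ := hf X' hX' (α ≫ x)
    exact ⟨hpo.desc t x ht, hpo.inr_desc t x ht⟩
  · intro hgep X' hX' x
    obtain ⟨t, ht⟩ := hgep X' hX' x
    exact ⟨t ≫ β, by rw [Category.assoc, ← hg, ht]⟩
end

section
/- Let (A, E) be an exact category and X a full additive subcategory. Suppose A →f B →l C' and B →g C →h A' are X-complete conflations (f, g X-monic and l, h X-epic). Then g ∘ f is an inflation, and the resulting conflation A →g∘f C →k B' is also X-complete. -/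
open CategoryTheory CategoryTheory.Limits

universe v u

/-- A Quillen exact structure on an additive category, recorded by its class of
conflations (kernel-cokernel pairs), together with the closure axioms. -/
structure ExactStructure (𝒜 : Type u) [Category.{v} 𝒜] [Preadditive 𝒜] where
  /-- the class of conflations -/
  IsConflation : ∀ {A B C : 𝒜}, (A ⟶ B) → (B ⟶ C) → Prop
  comp_zero : ∀ {A B C : 𝒜} (f : A ⟶ B) (g : B ⟶ C),
    IsConflation f g → f ≫ g = 0
  isKernel : ∀ {A B C : 𝒜} (f : A ⟶ B) (g : B ⟶ C) (h : IsConflation f g),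
    Nonempty (IsLimit (KernelFork.ofι f (comp_zero f g h)))
  isCokernel : ∀ {A B C : 𝒜} (f : A ⟶ B) (g : B ⟶ C) (h : IsConflation f g),
    Nonempty (IsColimit (CokernelCofork.ofπ g (comp_zero f g h)))
  infl_comp : ∀ {A B C : 𝒜} (f : A ⟶ B) (g : B ⟶ C),
    (∃ (Z : 𝒜) (p : B ⟶ Z), IsConflation f p) →
    (∃ (Z : 𝒜) (p : C ⟶ Z), IsConflation g p) →
    ∃ (Z : 𝒜) (p : C ⟶ Z), IsConflation (f ≫ g) p
  defl_comp : ∀ {A B C : 𝒜} (f : A ⟶ B) (g : B ⟶ C),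
    (∃ (Z : 𝒜) (i : Z ⟶ A), IsConflation i f) →
    (∃ (Z : 𝒜) (i : Z ⟶ B), IsConflation i g) →
    ∃ (Z : 𝒜) (i : Z ⟶ A), IsConflation i (f ≫ g)
  pushout : ∀ {A B A' : 𝒜} (f : A ⟶ B) (a : A ⟶ A'),
    (∃ (Z : 𝒜) (p : B ⟶ Z), IsConflation f p) →
    ∃ (B' : 𝒜) (f' : A' ⟶ B') (b : B ⟶ B'),
      IsPushout f a b f' ∧ ∃ (Z : 𝒜) (p : B' ⟶ Z), IsConflation f' p
  pullback : ∀ {B C B' : 𝒜} (g : B ⟶ C) (c : B' ⟶ C),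
    (∃ (Z : 𝒜) (i : Z ⟶ B), IsConflation i g) →
    ∃ (A' : 𝒜) (g' : A' ⟶ B') (b : A' ⟶ B),
      IsPullback g' b c g ∧ ∃ (Z : 𝒜) (i : Z ⟶ A'), IsConflation i g'

theorem stmt_12 {𝒜 : Type u} [Category.{v} 𝒜] [Preadditive 𝒜]
    (E : ExactStructure 𝒜) (P : 𝒜 → Prop)
    {A B C C' A' : 𝒜}
    (f : A ⟶ B) (l : B ⟶ C') (g : B ⟶ C) (h : C ⟶ A')
    (h₁ : E.IsConflation f l) (h₂ : E.IsConflation g h)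
    (hf : XMonic P f) (hl : XEpic P l) (hg : XMonic P g) (hh : XEpic P h) :
    ∃ (B' : 𝒜) (k : C ⟶ B'),
      E.IsConflation (f ≫ g) k ∧ XMonic P (f ≫ g) ∧ XEpic P k := by
  obtain ⟨Z, p, hc⟩ := E.infl_comp f g ⟨C', l, h₁⟩ ⟨A', h, h₂⟩
  obtain ⟨Q, g', b, hpo, Z', q, hq⟩ := E.pushout g l ⟨A', h, h₂⟩
  have hfl : f ≫ l = 0 := E.comp_zero f l h₁
  have hgh : g ≫ h = 0 := E.comp_zero g h h₂
  have hfgp : (f ≫ g) ≫ p = 0 := E.comp_zero _ p hc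
  have hcolim := (E.isCokernel _ p hc).some
  have hlcolim := (E.isCokernel f l h₁).some
  have hhcolim := (E.isCokernel g h h₂).some
  have hpepi : ∀ {W : 𝒜} (u v : Z ⟶ W), p ≫ u = p ≫ v → u = v := fun u v huv => by
    apply Cofork.IsColimit.hom_ext hcolim; simpa using huv
  refine ⟨Z, p, hc, ?_, ?_⟩
  · intro X' hX x
    obtain ⟨t, ht⟩ := hf X' hX x
    obtain ⟨u, hu⟩ := hg X' hX t
    exact ⟨u, by rw [Category.assoc, hu, ht]⟩
  · intro X' hX x
    -- s : Z ⟶ A' with p ≫ s = h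
    obtain ⟨s, hs⟩ := CokernelCofork.IsColimit.desc' hcolim h
      (by rw [Category.assoc, hgh, comp_zero])
    rw [Cofork.π_ofπ] at hs
    obtain ⟨t, ht⟩ := hh X' hX (x ≫ s)
    -- k' : C' ⟶ Z with l ≫ k' = g ≫ p
    obtain ⟨k', hk'⟩ := CokernelCofork.IsColimit.desc' hlcolim (g ≫ p)
      (by rw [← Category.assoc]; exact hfgp)
    rw [Cofork.π_ofπ] at hk'
    -- φ : Z ⟶ Q with p ≫ φ = b
    obtain ⟨φ, hφ⟩ := CokernelCofork.IsColimit.desc' hcolim b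
      (by rw [Category.assoc, hpo.w, ← Category.assoc, hfl, zero_comp])
    rw [Cofork.π_ofπ] at hφ
    -- φinv : Q ⟶ Z
    let φinv : Q ⟶ Z := hpo.desc p k' hk'.symm
    have hbφinv : b ≫ φinv = p := hpo.inl_desc _ _ _
    have hg'φinv : g' ≫ φinv = k' := hpo.inr_desc _ _ _
    have hφφinv : φ ≫ φinv = 𝟙 Z := hpepi _ _ (by
      rw [← Category.assoc, hφ, hbφinv, Category.comp_id])
    -- s' : Q ⟶ A'
    let s' : Q ⟶ A' := hpo.desc h 0 (by rw [hgh, comp_zero])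
    have hbs' : b ≫ s' = h := hpo.inl_desc _ _ _
    have hg's' : g' ≫ s' = 0 := hpo.inr_desc _ _ _
    have hg'q : g' ≫ q = 0 := E.comp_zero g' q hq
    -- ψ' : A' ⟶ Z' with h ≫ ψ' = b ≫ q
    obtain ⟨ψ', hψ'⟩ := CokernelCofork.IsColimit.desc' hhcolim (b ≫ q)
      (by rw [← Category.assoc, hpo.w, Category.assoc, hg'q, comp_zero])
    rw [Cofork.π_ofπ] at hψ'
    have hs'ψ' : s' ≫ ψ' = q := by
      apply hpo.hom_ext
      · rw [← Category.assoc, hbs', hψ']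
      · rw [← Category.assoc, hg's', zero_comp, hg'q]
    have hφs' : φ ≫ s' = s := hpepi _ _ (by
      rw [← Category.assoc, hφ, hbs', hs])
    -- y := x - t ≫ p kills s
    have hys : (x - t ≫ p) ≫ s = 0 := by
      rw [Preadditive.sub_comp, Category.assoc, hs, ht, sub_self]
    have h1 : ((x - t ≫ p) ≫ φ) ≫ s' = 0 := by rw [Category.assoc, hφs', hys]
    have hyq : ((x - t ≫ p) ≫ φ) ≫ q = 0 := by
      rw [← hs'ψ', ← Category.assoc, h1, zero_comp]
    obtain ⟨w, hw⟩ := KernelFork.IsLimit.lift' (E.isKernel g' q hq).some _ hyq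
    rw [Fork.ι_ofι] at hw
    obtain ⟨v, hv⟩ := hl X' hX w
    refine ⟨t + v ≫ g, ?_⟩
    have : x - t ≫ p = v ≫ g ≫ p := by
      calc x - t ≫ p = ((x - t ≫ p) ≫ φ) ≫ φinv := by
            rw [Category.assoc, hφφinv, Category.comp_id]
        _ = w ≫ g' ≫ φinv := by rw [← hw, Category.assoc]
        _ = v ≫ g ≫ p := by rw [hg'φinv, ← hk', ← Category.assoc, hv]
    rw [Preadditive.add_comp, Category.assoc, ← this]
    abel
end

section
/- Let (A, E) be an exact category and X a full additive subcategory such that for every object A there exist conflations X₁ → X₀ →p A with p an X-precover and X₁ ∈ X, and A →i X⁰ → X¹ with i an X-preenvelope and X¹ ∈ X. Then every morphism in the stable category A/X has a kernel and a cokernel; i.e., A/X is preabelian. -/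
open CategoryTheory CategoryTheory.Limits

universe v u

/-- The stable equivalence relation modulo the subcategory `P`. -/
def stableRel {C : Type u} [Category.{v} C] [Preadditive C] (P : C → Prop) :
    HomRel C :=
  fun {A B} f g => ∃ (X : C), P X ∧ ∃ (v : A ⟶ X) (u : X ⟶ B), f - g = v ≫ u

section Aux

variable {𝒜 : Type u} [Category.{v} 𝒜] [Preadditive 𝒜] {P : 𝒜 → Prop}

lemma stableRel_refl (hP : ∀ A : 𝒜, ∃ X : 𝒜, P X) {A B : 𝒜} (f : A ⟶ B) :
    stableRel P f f := by
  obtain ⟨X, hX⟩ := hP A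
  exact ⟨X, hX, 0, 0, by simp⟩

lemma stableRel_add [HasBinaryBiproducts 𝒜]
    (hsum : ∀ X Y : 𝒜, P X → P Y → P (X ⊞ Y))
    ⦃A B : 𝒜⦄ (f₁ f₂ g₁ g₂ : A ⟶ B)
    (h₁ : stableRel P f₁ f₂) (h₂ : stableRel P g₁ g₂) :
    stableRel P (f₁ + g₁) (f₂ + g₂) := by
  obtain ⟨X₁, hX₁, v₁, u₁, e₁⟩ := h₁
  obtain ⟨X₂, hX₂, v₂, u₂, e₂⟩ := h₂
  refine ⟨X₁ ⊞ X₂, hsum _ _ hX₁ hX₂, biprod.lift v₁ v₂, biprod.desc u₁ u₂, ?_⟩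
  rw [biprod.lift_desc, ← e₁, ← e₂]
  abel

lemma stableRel_congruence [HasBinaryBiproducts 𝒜]
    (hP : ∀ A : 𝒜, ∃ X : 𝒜, P X)
    (hsum : ∀ X Y : 𝒜, P X → P Y → P (X ⊞ Y)) :
    Congruence (stableRel P) where
  equivalence :=
    { refl := fun f => stableRel_refl hP f
      symm := by
        rintro f g ⟨X, hX, v, u, e⟩
        exact ⟨X, hX, -v, u, by rw [Preadditive.neg_comp, ← e]; abel⟩
      trans := by
        rintro f g h ⟨X₁, hX₁, v₁, u₁, e₁⟩ ⟨X₂, hX₂, v₂, u₂, e₂⟩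
        refine ⟨X₁ ⊞ X₂, hsum _ _ hX₁ hX₂, biprod.lift v₁ v₂, biprod.desc u₁ u₂, ?_⟩
        rw [biprod.lift_desc, ← e₁, ← e₂]
        abel }
  comp_left := by
    rintro X Y Z f g g' ⟨X', hX', v, u, e⟩
    exact ⟨X', hX', f ≫ v, u, by rw [← Preadditive.comp_sub, e, ← Category.assoc]⟩
  comp_right := by
    rintro X Y Z f f' g ⟨X', hX', v, u, e⟩
    exact ⟨X', hX', v, u ≫ g, by rw [← Preadditive.sub_comp, e, Category.assoc]⟩

/-- Kernel data in `𝒜` for the stable category: pull back an `X`-precover deflation. -/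
lemma kernelData [HasBinaryBiproducts 𝒜] (E : ExactStructure 𝒜)
    (hsum : ∀ X Y : 𝒜, P X → P Y → P (X ⊞ Y))
    (hcover : ∀ A : 𝒜, ∃ (X₁ X₀ : 𝒜) (i : X₁ ⟶ X₀) (p : X₀ ⟶ A),
      E.IsConflation i p ∧ P X₁ ∧ P X₀ ∧ XEpic P p)
    {A B : 𝒜} (f : A ⟶ B) :
    ∃ (D : 𝒜) (ι : D ⟶ A),
      stableRel P (ι ≫ f) 0 ∧
      (∀ {W : 𝒜} (g : W ⟶ A), stableRel P (g ≫ f) 0 →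
        ∃ h : W ⟶ D, stableRel P (h ≫ ι) g) ∧
      (∀ {W : 𝒜} (h : W ⟶ D), stableRel P (h ≫ ι) 0 → stableRel P h 0) := by
  obtain ⟨X₁, X₀, k, p, conf, hX₁, hX₀, hepic⟩ := hcover B
  obtain ⟨D, g', b, hpb, -⟩ := E.pullback p f ⟨X₁, k, conf⟩
  have hw : g' ≫ f = b ≫ p := hpb.w
  have gXepic : ∀ (X' : 𝒜), P X' → ∀ x : X' ⟶ A, ∃ t : X' ⟶ D, t ≫ g' = x := by
    intro X' hX' x
    obtain ⟨w, hw'⟩ := hepic X' hX' (x ≫ f)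
    exact ⟨hpb.lift x w hw'.symm, hpb.lift_fst _ _ _⟩
  refine ⟨D, g', ⟨X₀, hX₀, b, p, by rw [sub_zero, hw]⟩, ?_, ?_⟩
  · intro W g hg
    obtain ⟨X, hX, v, u, e⟩ := hg
    rw [sub_zero] at e
    obtain ⟨t, ht⟩ := hepic X hX u
    refine ⟨hpb.lift g (v ≫ t) (by rw [e, ← ht, Category.assoc]), ?_⟩
    rw [hpb.lift_fst]
    exact ⟨X, hX, 0, 0, by simp⟩
  · intro W h hh
    obtain ⟨X, hX, v, u, e⟩ := hh
    rw [sub_zero] at e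
    obtain ⟨t, ht⟩ := gXepic X hX u
    have h'g : (h - v ≫ t) ≫ g' = 0 := by
      rw [Preadditive.sub_comp, e, Category.assoc, ht, sub_self]
    have hbp : ((h - v ≫ t) ≫ b) ≫ p = 0 := by
      rw [Category.assoc, ← hw, ← Category.assoc, h'g, zero_comp]
    obtain ⟨hk⟩ := E.isKernel k p conf
    obtain ⟨s, hs⟩ := KernelFork.IsLimit.lift' hk ((h - v ≫ t) ≫ b) hbp
    have hs' : s ≫ k = (h - v ≫ t) ≫ b := by simpa using hs
    have hkp : (0 : X₁ ⟶ A) ≫ f = k ≫ p := by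
      rw [zero_comp, E.comp_zero k p conf]
    have h'eq : h - v ≫ t = s ≫ hpb.lift 0 k hkp := by
      apply hpb.hom_ext
      · rw [Category.assoc, hpb.lift_fst, comp_zero, h'g]
      · rw [Category.assoc, hpb.lift_snd, hs']
    refine ⟨X ⊞ X₁, hsum X X₁ hX hX₁, biprod.lift v s,
      biprod.desc t (hpb.lift 0 k hkp), ?_⟩
    rw [sub_zero, biprod.lift_desc, ← h'eq]
    abel

/-- Cokernel data in `𝒜` for the stable category: push out an `X`-preenvelope inflation. -/
lemma cokernelData [HasBinaryBiproducts 𝒜] (E : ExactStructure 𝒜)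
    (hsum : ∀ X Y : 𝒜, P X → P Y → P (X ⊞ Y))
    (henv : ∀ A : 𝒜, ∃ (X₀ X₁ : 𝒜) (i : A ⟶ X₀) (p : X₀ ⟶ X₁),
      E.IsConflation i p ∧ P X₀ ∧ P X₁ ∧ XMonic P i)
    {A B : 𝒜} (f : A ⟶ B) :
    ∃ (C : 𝒜) (π : B ⟶ C),
      stableRel P (f ≫ π) 0 ∧
      (∀ {T : 𝒜} (g : B ⟶ T), stableRel P (f ≫ g) 0 →
        ∃ h : C ⟶ T, stableRel P (π ≫ h) g) ∧
      (∀ {T : 𝒜} (h : C ⟶ T), stableRel P (π ≫ h) 0 → stableRel P h 0) := by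
  obtain ⟨X₀, X₁, i, pA, conf, hX₀, hX₁, hmono⟩ := henv A
  obtain ⟨Cobj, j, b, hpo, -⟩ := E.pushout i f ⟨X₁, pA, conf⟩
  have hw : i ≫ b = f ≫ j := hpo.w
  have jXmono : ∀ (X' : 𝒜), P X' → ∀ x : B ⟶ X', ∃ t : Cobj ⟶ X', j ≫ t = x := by
    intro X' hX' x
    obtain ⟨w, hw'⟩ := hmono X' hX' (f ≫ x)
    exact ⟨hpo.desc w x hw', hpo.inr_desc _ _ _⟩
  refine ⟨Cobj, j, ⟨X₀, hX₀, i, b, by rw [sub_zero, hw]⟩, ?_, ?_⟩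
  · intro T g hg
    obtain ⟨X, hX, v, u, e⟩ := hg
    rw [sub_zero] at e
    obtain ⟨t, ht⟩ := hmono X hX v
    refine ⟨hpo.desc (t ≫ u) g (by rw [e, ← ht, Category.assoc]), ?_⟩
    rw [hpo.inr_desc]
    exact ⟨X, hX, 0, 0, by simp⟩
  · intro T h hh
    obtain ⟨X, hX, v, u, e⟩ := hh
    rw [sub_zero] at e
    obtain ⟨t, ht⟩ := jXmono X hX v
    have h'j : j ≫ (h - t ≫ u) = 0 := by
      rw [Preadditive.comp_sub, e, ← Category.assoc, ht, sub_self]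
    have hbp : i ≫ (b ≫ (h - t ≫ u)) = 0 := by
      rw [← Category.assoc, hw, Category.assoc, h'j, comp_zero]
    obtain ⟨hc⟩ := E.isCokernel i pA conf
    obtain ⟨s, hs⟩ := CokernelCofork.IsColimit.desc' hc (b ≫ (h - t ≫ u)) hbp
    have hs' : pA ≫ s = b ≫ (h - t ≫ u) := by simpa using hs
    have hkp : i ≫ pA = f ≫ (0 : B ⟶ X₁) := by
      rw [comp_zero, E.comp_zero i pA conf]
    have h'eq : h - t ≫ u = hpo.desc pA 0 hkp ≫ s := by
      apply hpo.hom_ext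
      · rw [← Category.assoc, hpo.inl_desc, hs']
      · rw [← Category.assoc, hpo.inr_desc, zero_comp, h'j]
    refine ⟨X ⊞ X₁, hsum X X₁ hX hX₁, biprod.lift t (hpo.desc pA 0 hkp),
      biprod.desc u s, ?_⟩
    rw [sub_zero, biprod.lift_desc, ← h'eq]
    abel

lemma quot_hasKernel (r : HomRel 𝒜) [Congruence r]
    (hr : ∀ ⦃X Y : 𝒜⦄ (f₁ f₂ g₁ g₂ : X ⟶ Y)
      (_ : r f₁ f₂) (_ : r g₁ g₂), r (f₁ + g₁) (f₂ + g₂))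
    {A B : 𝒜} (f : A ⟶ B) (D : 𝒜) (ι : D ⟶ A)
    (h0 : r (ι ≫ f) 0)
    (hlift : ∀ {W : 𝒜} (g : W ⟶ A), r (g ≫ f) 0 → ∃ h : W ⟶ D, r (h ≫ ι) g)
    (hmono : ∀ {W : 𝒜} (h : W ⟶ D), r (h ≫ ι) 0 → r h 0) :
    letI := CategoryTheory.Quotient.preadditive r hr
    HasKernel ((CategoryTheory.Quotient.functor r).map f) := by
  letI := CategoryTheory.Quotient.preadditive r hr
  letI : (CategoryTheory.Quotient.functor r).Additive :=
    CategoryTheory.Quotient.functor_additive r hr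
  set F := CategoryTheory.Quotient.functor r with hF
  have mapz : ∀ {W V : 𝒜} (g : W ⟶ V), r g 0 → F.map g = 0 := by
    intro W V g hg
    rw [← F.map_zero W V]
    exact (CategoryTheory.Quotient.functor_map_eq_iff r _ _).2 hg
  have zmap : ∀ {W V : 𝒜} (g : W ⟶ V), F.map g = 0 → r g 0 := by
    intro W V g hg
    exact (CategoryTheory.Quotient.functor_map_eq_iff r _ _).1
      (by rw [hg, F.map_zero])
  have key : ∀ {W : CategoryTheory.Quotient r} (ψ : W ⟶ F.obj A),
      ψ ≫ F.map f = 0 → ∃ χ : W ⟶ F.obj D, χ ≫ F.map ι = ψ := by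
    intro W ψ hψ
    obtain ⟨g, rfl⟩ := F.map_surjective (X := W.as) ψ
    obtain ⟨h, hh⟩ := hlift g (zmap _ (by rw [F.map_comp]; exact hψ))
    exact ⟨F.map h, by
      rw [← F.map_comp]
      exact (CategoryTheory.Quotient.functor_map_eq_iff r _ _).2 hh⟩
  have qmono : ∀ {W : CategoryTheory.Quotient r} (χ χ' : W ⟶ F.obj D),
      χ ≫ F.map ι = χ' ≫ F.map ι → χ = χ' := by
    intro W χ χ' h
    obtain ⟨a, rfl⟩ := F.map_surjective (X := W.as) χ
    obtain ⟨a', rfl⟩ := F.map_surjective (X := W.as) χ'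
    have e : F.map ((a - a') ≫ ι) = 0 := by
      rw [Preadditive.sub_comp, F.map_sub, F.map_comp, F.map_comp, h, sub_self]
    have e2 := mapz _ (hmono _ (zmap _ e))
    rw [F.map_sub] at e2
    exact sub_eq_zero.1 e2
  exact HasLimit.mk ⟨_, KernelFork.IsLimit.ofι (F.map ι)
    (by rw [← F.map_comp]; exact mapz _ h0)
    (fun {W'} ψ hψ => (key ψ hψ).choose)
    (fun {W'} ψ hψ => (key ψ hψ).choose_spec)
    (fun {W'} ψ hψ m hm => qmono _ _ (by rw [hm, (key ψ hψ).choose_spec]))⟩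

lemma quot_hasCokernel (r : HomRel 𝒜) [Congruence r]
    (hr : ∀ ⦃X Y : 𝒜⦄ (f₁ f₂ g₁ g₂ : X ⟶ Y)
      (_ : r f₁ f₂) (_ : r g₁ g₂), r (f₁ + g₁) (f₂ + g₂))
    {A B : 𝒜} (f : A ⟶ B) (C : 𝒜) (π : B ⟶ C)
    (h0 : r (f ≫ π) 0)
    (hdesc : ∀ {T : 𝒜} (g : B ⟶ T), r (f ≫ g) 0 → ∃ h : C ⟶ T, r (π ≫ h) g)
    (hepi : ∀ {T : 𝒜} (h : C ⟶ T), r (π ≫ h) 0 → r h 0) :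
    letI := CategoryTheory.Quotient.preadditive r hr
    HasCokernel ((CategoryTheory.Quotient.functor r).map f) := by
  letI := CategoryTheory.Quotient.preadditive r hr
  letI : (CategoryTheory.Quotient.functor r).Additive :=
    CategoryTheory.Quotient.functor_additive r hr
  set F := CategoryTheory.Quotient.functor r with hF
  have mapz : ∀ {W V : 𝒜} (g : W ⟶ V), r g 0 → F.map g = 0 := by
    intro W V g hg
    rw [← F.map_zero W V]
    exact (CategoryTheory.Quotient.functor_map_eq_iff r _ _).2 hg
  have zmap : ∀ {W V : 𝒜} (g : W ⟶ V), F.map g = 0 → r g 0 := by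
    intro W V g hg
    exact (CategoryTheory.Quotient.functor_map_eq_iff r _ _).1
      (by rw [hg, F.map_zero])
  have key : ∀ {T : CategoryTheory.Quotient r} (ψ : F.obj B ⟶ T),
      F.map f ≫ ψ = 0 → ∃ χ : F.obj C ⟶ T, F.map π ≫ χ = ψ := by
    intro T ψ hψ
    obtain ⟨g, rfl⟩ := F.map_surjective (Y := T.as) ψ
    obtain ⟨h, hh⟩ := hdesc g (zmap _ (by rw [F.map_comp]; exact hψ))
    exact ⟨F.map h, by
      rw [← F.map_comp]
      exact (CategoryTheory.Quotient.functor_map_eq_iff r _ _).2 hh⟩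
  have qepi : ∀ {T : CategoryTheory.Quotient r} (χ χ' : F.obj C ⟶ T),
      F.map π ≫ χ = F.map π ≫ χ' → χ = χ' := by
    intro T χ χ' h
    obtain ⟨a, rfl⟩ := F.map_surjective (Y := T.as) χ
    obtain ⟨a', rfl⟩ := F.map_surjective (Y := T.as) χ'
    have e : F.map (π ≫ (a - a')) = 0 := by
      rw [Preadditive.comp_sub, F.map_sub, F.map_comp, F.map_comp, h, sub_self]
    have e2 := mapz _ (hepi _ (zmap _ e))
    rw [F.map_sub] at e2
    exact sub_eq_zero.1 e2
  exact HasColimit.mk ⟨_, CokernelCofork.IsColimit.ofπ (F.map π)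
    (by rw [← F.map_comp]; exact mapz _ h0)
    (fun {T'} ψ hψ => (key ψ hψ).choose)
    (fun {T'} ψ hψ => (key ψ hψ).choose_spec)
    (fun {T'} ψ hψ m hm => qepi _ _ (by rw [hm, (key ψ hψ).choose_spec]))⟩

end Aux

theorem stmt_13 {𝒜 : Type u} [Category.{v} 𝒜] [Preadditive 𝒜]
    [HasBinaryBiproducts 𝒜]
    (E : ExactStructure 𝒜) (P : 𝒜 → Prop)
    (hsum : ∀ X Y : 𝒜, P X → P Y → P (X ⊞ Y))
    -- every object has an `X`-precover which is a deflation with kernel in `X`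
    (hcover : ∀ A : 𝒜, ∃ (X₁ X₀ : 𝒜) (i : X₁ ⟶ X₀) (p : X₀ ⟶ A),
      E.IsConflation i p ∧ P X₁ ∧ P X₀ ∧ XEpic P p)
    -- every object has an `X`-preenvelope which is an inflation with cokernel in `X`
    (henv : ∀ A : 𝒜, ∃ (X₀ X₁ : 𝒜) (i : A ⟶ X₀) (p : X₀ ⟶ X₁),
      E.IsConflation i p ∧ P X₀ ∧ P X₁ ∧ XMonic P i) :
    Nonempty ((inst : Preadditive (Quotient (stableRel P))) ×'
      (@Functor.Additive 𝒜 (Quotient (stableRel P)) _ _ _ inst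
          (Quotient.functor (stableRel P)) ∧
        @HasKernels (Quotient (stableRel P)) _
          (@Preadditive.preadditiveHasZeroMorphisms _ _ inst) ∧
        @HasCokernels (Quotient (stableRel P)) _
          (@Preadditive.preadditiveHasZeroMorphisms _ _ inst))) := by
  have hP : ∀ A : 𝒜, ∃ X : 𝒜, P X := by
    intro A
    obtain ⟨X₁, X₀, _, _, _, hX₁, _⟩ := hcover A
    exact ⟨X₁, hX₁⟩
  letI : Congruence (stableRel P) := stableRel_congruence hP hsum
  have hr : ∀ ⦃X Y : 𝒜⦄ (f₁ f₂ g₁ g₂ : X ⟶ Y)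
      (_ : stableRel P f₁ f₂) (_ : stableRel P g₁ g₂),
      stableRel P (f₁ + g₁) (f₂ + g₂) := fun _ _ f₁ f₂ g₁ g₂ h₁ h₂ =>
    stableRel_add hsum f₁ f₂ g₁ g₂ h₁ h₂
  letI inst : Preadditive (Quotient (stableRel P)) :=
    CategoryTheory.Quotient.preadditive (stableRel P) hr
  refine ⟨⟨inst, CategoryTheory.Quotient.functor_additive (stableRel P) hr, ?_, ?_⟩⟩
  · refine ⟨fun {X Y} φ => ?_⟩
    obtain ⟨f, rfl⟩ :=
      (Quotient.functor (stableRel P)).map_surjective (X := X.as) (Y := Y.as) φ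
    obtain ⟨D, ι, h0, hlift, hmono⟩ := kernelData E hsum hcover f
    exact quot_hasKernel (stableRel P) hr f D ι h0 hlift hmono
  · refine ⟨fun {X Y} φ => ?_⟩
    obtain ⟨f, rfl⟩ :=
      (Quotient.functor (stableRel P)).map_surjective (X := X.as) (Y := Y.as) φ
    obtain ⟨C, π, h0, hdesc, hepi⟩ := cokernelData E hsum henv f
    exact quot_hasCokernel (stableRel P) hr f C π h0 hdesc hepi
end

section
/- Let (T, [1]) be a triangulated category and X a full additive subcategory such that for each A ∈ T there are distinguished triangles A[-1] → X₁ → X₀ →p A with p an X-precover and X₁ ∈ X, and A →i X⁰ → X¹ → A[1] with i an X-preenvelope and X¹ ∈ X. Suppose furthermore that for every distinguished triangle A →f B →g C → A[1]: if the class of g is an epimorphism in T/X then f is X-monic, and if the class of f is a monomorphism in T/X then g is X-epic. Then the stable category T/X is an abelian category. -/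
open CategoryTheory CategoryTheory.Limits CategoryTheory.Pretriangulated

set_option linter.unusedSectionVars false

universe v u

namespace Stmt15

section Basic

variable {T : Type u} [Category.{v} T] [Preadditive T] [HasBinaryBiproducts T]
  {P : T → Prop}

lemma rel_add (hsum : ∀ X Y : T, P X → P Y → P (X ⊞ Y)) {A B : T}
    {f₁ f₂ g₁ g₂ : A ⟶ B} (h₁ : stableRel P f₁ f₂) (h₂ : stableRel P g₁ g₂) :
    stableRel P (f₁ + g₁) (f₂ + g₂) := by
  obtain ⟨M, hM, v, u, huv⟩ := h₁
  obtain ⟨N, hN, v', u', huv'⟩ := h₂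
  refine ⟨M ⊞ N, hsum _ _ hM hN, biprod.lift v v', biprod.desc u u', ?_⟩
  rw [biprod.lift_desc, ← huv, ← huv']
  abel

lemma qcong (hne : ∃ Z, P Z) (hsum : ∀ X Y : T, P X → P Y → P (X ⊞ Y)) :
    Congruence (stableRel P) where
  equivalence := by
    obtain ⟨Z, hZ⟩ := hne
    intro X Y
    constructor
    · exact fun f => ⟨Z, hZ, 0, 0, by simp⟩
    · rintro f g ⟨M, hM, v, u, huv⟩
      exact ⟨M, hM, -v, u, by rw [Preadditive.neg_comp, ← huv]; abel⟩
    · rintro f g h ⟨M, hM, v, u, huv⟩ ⟨N, hN, v', u', huv'⟩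
      refine ⟨M ⊞ N, hsum _ _ hM hN, biprod.lift v v', biprod.desc u u', ?_⟩
      rw [biprod.lift_desc, ← huv, ← huv']
      abel
  comp_left := by
    rintro X Y Z f g g' ⟨M, hM, v, u, huv⟩
    exact ⟨M, hM, f ≫ v, u, by rw [← Preadditive.comp_sub, huv, Category.assoc]⟩
  comp_right := by
    rintro X Y Z f f' g ⟨M, hM, v, u, huv⟩
    exact ⟨M, hM, v, u ≫ g, by rw [← Preadditive.sub_comp, huv, Category.assoc]⟩

/-- The preadditive structure on the stable quotient. -/
def qadd (hne : ∃ Z, P Z) (hsum : ∀ X Y : T, P X → P Y → P (X ⊞ Y)) :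
    Preadditive (CategoryTheory.Quotient (stableRel P)) :=
  haveI := qcong hne hsum
  Quotient.preadditive _ (fun _ _ _ _ _ _ h₁ h₂ => rel_add hsum h₁ h₂)

end Basic

section Q

variable {T : Type u} [Category.{v} T] [Preadditive T] [HasBinaryBiproducts T]
  (P : T → Prop) [Congruence (stableRel P)]
  [Preadditive (CategoryTheory.Quotient (stableRel P))]
  [(Quotient.functor (stableRel P)).Additive]

local notation "π" => Quotient.functor (stableRel P)

lemma pz {A B M : T} (hM : P M) (v : A ⟶ M) (u : M ⟶ B) :
    (π).map (v ≫ u) = 0 := by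
  have : (π).map (v ≫ u) = (π).map 0 :=
    (Quotient.functor_map_eq_iff _ _ _).2 ⟨M, hM, v, u, by simp⟩
  simpa using this

lemma zrep {A B : T} {x : A ⟶ B} (hx : (π).map x = 0) :
    ∃ M, P M ∧ ∃ (v : A ⟶ M) (u : M ⟶ B), x = v ≫ u := by
  have : (π).map x = (π).map 0 := by simpa using hx
  obtain ⟨M, hM, v, u, huv⟩ := (Quotient.functor_map_eq_iff _ _ _).1 this
  exact ⟨M, hM, v, u, by simpa using huv⟩

/-- The projection `A ⊞ X₀ → A` becomes an isomorphism in the quotient when `X₀ ∈ P`. -/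
@[simps] noncomputable def pIso (A X₀ : T) (hX₀ : P X₀) : (π).obj (A ⊞ X₀) ≅ (π).obj A where
  hom := (π).map biprod.fst
  inv := (π).map biprod.inl
  hom_inv_id := by
    have h : (π).map ((biprod.fst ≫ biprod.inl : A ⊞ X₀ ⟶ A ⊞ X₀)) = (π).map (𝟙 _) := by
      refine (Quotient.functor_map_eq_iff _ _ _).2
        ⟨X₀, hX₀, -biprod.snd, biprod.inr, ?_⟩
      have := biprod.total (X := A) (Y := X₀)
      rw [Preadditive.neg_comp]
      rw [← this]
      abel
    rw [← (π).map_comp, h, (π).map_id]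
  inv_hom_id := by rw [← (π).map_comp, biprod.inl_fst, (π).map_id]

lemma isIso_pfst (A X₀ : T) (hX₀ : P X₀) :
    IsIso ((π).map (biprod.fst : A ⊞ X₀ ⟶ A)) :=
  ⟨(π).map biprod.inl, (pIso P A X₀ hX₀).hom_inv_id, (pIso P A X₀ hX₀).inv_hom_id⟩

lemma isIso_pinl (A X₀ : T) (hX₀ : P X₀) :
    IsIso ((π).map (biprod.inl : A ⟶ A ⊞ X₀)) :=
  ⟨(π).map biprod.fst, (pIso P A X₀ hX₀).inv_hom_id, (pIso P A X₀ hX₀).hom_inv_id⟩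

lemma pinl_pfst (A X₀ : T) :
    (π).map (biprod.inl : A ⟶ A ⊞ X₀) ≫ (π).map (biprod.fst : A ⊞ X₀ ⟶ A) = 𝟙 _ := by
  rw [← Functor.map_comp, biprod.inl_fst, CategoryTheory.Functor.map_id]

lemma pdesc_eq {A B X₀ : T} (hX₀ : P X₀) (f : A ⟶ B) (p : X₀ ⟶ B) :
    (π).map (biprod.desc f p) = (π).map (biprod.fst : A ⊞ X₀ ⟶ A) ≫ (π).map f := by
  rw [← Functor.map_comp]
  refine (Quotient.functor_map_eq_iff _ _ _).2 ⟨X₀, hX₀, biprod.snd, p, ?_⟩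
  apply biprod.hom_ext' <;>
    simp [Preadditive.comp_sub]

lemma plift_eq {A B X₀ : T} (hX₀ : P X₀) (f : A ⟶ B) (i : A ⟶ X₀) :
    (π).map (biprod.lift f i) = (π).map f ≫ (π).map (biprod.inl : B ⟶ B ⊞ X₀) := by
  rw [← Functor.map_comp]
  refine (Quotient.functor_map_eq_iff _ _ _).2 ⟨X₀, hX₀, i, biprod.inr, ?_⟩
  apply biprod.hom_ext <;>
    simp [Preadditive.sub_comp]

end Q

section QT

variable {T : Type u} [Category.{v} T] [Preadditive T] [HasZeroObject T]
  [HasShift T ℤ] [∀ n : ℤ, (shiftFunctor T n).Additive] [Pretriangulated T]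
  [HasBinaryBiproducts T]
  (P : T → Prop) [Congruence (stableRel P)]
  [Preadditive (CategoryTheory.Quotient (stableRel P))]
  [(Quotient.functor (stableRel P)).Additive]

local notation "π" => Quotient.functor (stableRel P)

/-- If the first map of a distinguished triangle is `X`-monic, the image of the second map
in the stable quotient is an epimorphism. -/
lemma epi_of_xmonic
    (hcover : ∀ A : T, ∃ (X₁ X₀ : T) (u : X₁ ⟶ X₀) (p : X₀ ⟶ A)
      (w : A ⟶ X₁⟦(1 : ℤ)⟧), Triangle.mk u p w ∈ (distTriang T) ∧
        P X₁ ∧ P X₀ ∧ XEpic P p)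
    {A E C' : T} {f : A ⟶ E} {g : E ⟶ C'} {h : C' ⟶ A⟦(1 : ℤ)⟧}
    (hT : Triangle.mk f g h ∈ distTriang T) (hf : XMonic P f) :
    Epi ((π).map g) := by
  refine Preadditive.epi_of_cancel_zero _ (fun {R} u' hu' => ?_)
  obtain ⟨u, rfl⟩ := (π).map_surjective (X := C') (Y := R.as) u'
  rw [← (π).map_comp] at hu'
  obtain ⟨M, hM, α, β, hαβ⟩ := zrep P hu'
  obtain ⟨X₁, X₀, u₀, p, w, hTc, hX₁, hX₀, hp⟩ := hcover R.as
  obtain ⟨β', hβ'⟩ := hp M hM β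
  have hpw : p ≫ w = 0 := comp_distTriang_mor_zero₂₃ _ hTc
  have h1 : g ≫ (u ≫ w) = 0 := by
    rw [← Category.assoc, hαβ, ← hβ', Category.assoc, Category.assoc, hpw,
      comp_zero, comp_zero]
  obtain ⟨σ, hσ⟩ := Triangle.yoneda_exact₃ _ hT (u ≫ w) h1
  obtain ⟨x, hx⟩ := (shiftFunctor T (1 : ℤ)).map_surjective σ
  obtain ⟨t, ht⟩ := hf X₁ hX₁ x
  have h2 : u ≫ w = 0 := by
    have hσ' : σ = f⟦(1 : ℤ)⟧' ≫ t⟦(1 : ℤ)⟧' := by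
      erw [← Functor.map_comp, ht, hx]
    have hhf : (Triangle.mk f g h).mor₃ ≫ f⟦(1 : ℤ)⟧' = 0 :=
      comp_distTriang_mor_zero₃₁ _ hT
    erw [hσ, hσ', ← Category.assoc, hhf, zero_comp]; rfl
  obtain ⟨c, hc⟩ := Triangle.coyoneda_exact₃ _ hTc u h2
  rw [hc]
  exact pz P hX₀ c _

/-- If the second map of a distinguished triangle is `X`-epic, the image of the first map
in the stable quotient is a monomorphism. -/
lemma mono_of_xepic
    (henv : ∀ A : T, ∃ (X₀ X₁ : T) (i : A ⟶ X₀) (q : X₀ ⟶ X₁)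
      (w : X₁ ⟶ A⟦(1 : ℤ)⟧), Triangle.mk i q w ∈ (distTriang T) ∧
        P X₀ ∧ P X₁ ∧ XMonic P i)
    {K E B : T} {k : K ⟶ E} {e : E ⟶ B} {h : B ⟶ K⟦(1 : ℤ)⟧}
    (hT : Triangle.mk k e h ∈ distTriang T) (he : XEpic P e) :
    Mono ((π).map k) := by
  refine Preadditive.mono_of_cancel_zero _ (fun {R} u' hu' => ?_)
  obtain ⟨u, rfl⟩ := (π).map_surjective (X := R.as) (Y := K) u'
  rw [← (π).map_comp] at hu'
  obtain ⟨M, hM, α, β, hαβ⟩ := zrep P hu'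
  obtain ⟨X₀, X₁, i, q, w, hTe, hX₀, hX₁, hi⟩ := henv R.as
  obtain ⟨α', hα'⟩ := hi M hM α
  have hTe'd : (Triangle.mk i q w).invRotate ∈ distTriang T := inv_rot_of_distTriang _ hTe
  have hδi : (Triangle.mk i q w).invRotate.mor₁ ≫ i = 0 :=
    comp_distTriang_mor_zero₁₂ _ hTe'd
  have h1 : ((Triangle.mk i q w).invRotate.mor₁ ≫ u) ≫ k = 0 := by
    erw [Category.assoc, hαβ, ← hα']
    simp only [Category.assoc]
    exact (Category.assoc _ _ _).symm.trans (((reassoc_of% hδi) (α' ≫ β)).trans zero_comp)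
  have hTr'd : (Triangle.mk k e h).invRotate ∈ distTriang T := inv_rot_of_distTriang _ hT
  obtain ⟨τ, hτ⟩ := Triangle.coyoneda_exact₂ _ hTr'd
    ((Triangle.mk i q w).invRotate.mor₁ ≫ u) h1
  obtain ⟨y, hy⟩ := (shiftFunctor T (-1 : ℤ)).map_surjective τ
  obtain ⟨t, ht⟩ := he X₁ hX₁ y
  have heh : e ≫ h = 0 := comp_distTriang_mor_zero₂₃ _ hT
  have he2 : e⟦(-1 : ℤ)⟧' ≫ (Triangle.mk k e h).invRotate.mor₁ = 0 := by
    dsimp [Triangle.invRotate]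
    erw [Preadditive.comp_neg, ← Functor.map_comp_assoc, heh, Functor.map_zero,
      zero_comp, neg_zero]; rfl
  have h2 : (Triangle.mk i q w).invRotate.mor₁ ≫ u = 0 := by
    erw [hτ, ← hy, ← ht, Functor.map_comp, Category.assoc, he2, comp_zero]; rfl
  obtain ⟨c, hc⟩ := Triangle.yoneda_exact₂ _ hTe'd u h2
  rw [hc]
  exact pz P hX₀ _ c

/-- cokernel property: if `f` is `X`-monic then `π g` is a cokernel of `π f`. -/
lemma cokernel_of_xmonic
    (hcover : ∀ A : T, ∃ (X₁ X₀ : T) (u : X₁ ⟶ X₀) (p : X₀ ⟶ A)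
      (w : A ⟶ X₁⟦(1 : ℤ)⟧), Triangle.mk u p w ∈ (distTriang T) ∧
        P X₁ ∧ P X₀ ∧ XEpic P p)
    {A E C' : T} {f : A ⟶ E} {g : E ⟶ C'} {h : C' ⟶ A⟦(1 : ℤ)⟧}
    (hT : Triangle.mk f g h ∈ distTriang T) (hf : XMonic P f)
    (w0 : (π).map f ≫ (π).map g = 0) :
    Nonempty (IsColimit (CokernelCofork.ofπ ((π).map g) w0)) := by
  haveI := epi_of_xmonic P hcover hT hf
  have key : ∀ (R : CategoryTheory.Quotient (stableRel P))
      (k : (π).obj E ⟶ R), (π).map f ≫ k = 0 → ∃ l, (π).map g ≫ l = k := by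
    intro R k hk
    obtain ⟨t, rfl⟩ := (π).map_surjective (X := E) (Y := R.as) k
    rw [← (π).map_comp] at hk
    obtain ⟨M, hM, α, β, hαβ⟩ := zrep P hk
    obtain ⟨α', hα'⟩ := hf M hM α
    have h1 : f ≫ (t - α' ≫ β) = 0 := by
      rw [Preadditive.comp_sub, hαβ, ← hα']
      simp
    obtain ⟨s, hs⟩ := Triangle.yoneda_exact₂ _ hT (t - α' ≫ β) h1
    have hs' : t - α' ≫ β = g ≫ s := hs
    refine ⟨(π).map s, ?_⟩
    erw [← (π).map_comp, ← hs', Functor.map_sub, pz P hM α' β, sub_zero]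
  exact ⟨CokernelCofork.IsColimit.ofπ' _ _
    (fun {R} k hk => ⟨(key R k hk).choose, (key R k hk).choose_spec⟩)⟩

/-- kernel property: if `e` is `X`-epic then `π k` is a kernel of `π e`. -/
lemma kernel_of_xepic
    (henv : ∀ A : T, ∃ (X₀ X₁ : T) (i : A ⟶ X₀) (q : X₀ ⟶ X₁)
      (w : X₁ ⟶ A⟦(1 : ℤ)⟧), Triangle.mk i q w ∈ (distTriang T) ∧
        P X₀ ∧ P X₁ ∧ XMonic P i)
    {K E B : T} {k : K ⟶ E} {e : E ⟶ B} {h : B ⟶ K⟦(1 : ℤ)⟧}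
    (hT : Triangle.mk k e h ∈ distTriang T) (he : XEpic P e)
    (w0 : (π).map k ≫ (π).map e = 0) :
    Nonempty (IsLimit (KernelFork.ofι ((π).map k) w0)) := by
  haveI := mono_of_xepic P henv hT he
  have key : ∀ (R : CategoryTheory.Quotient (stableRel P))
      (x : R ⟶ (π).obj E), x ≫ (π).map e = 0 → ∃ l, l ≫ (π).map k = x := by
    intro R x hx
    obtain ⟨t, rfl⟩ := (π).map_surjective (X := R.as) (Y := E) x
    rw [← (π).map_comp] at hx
    obtain ⟨M, hM, α, β, hαβ⟩ := zrep P hx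
    obtain ⟨β', hβ'⟩ := he M hM β
    have h1 : (t - α ≫ β') ≫ e = 0 := by
      rw [Preadditive.sub_comp, hαβ]
      simp only [Category.assoc, hβ']
      simp
    obtain ⟨s, hs⟩ := Triangle.coyoneda_exact₂ _ hT (t - α ≫ β') h1
    have hs' : t - α ≫ β' = s ≫ k := hs
    refine ⟨(π).map s, ?_⟩
    erw [← (π).map_comp, ← hs', Functor.map_sub, pz P hM α β', sub_zero]
  exact ⟨KernelFork.IsLimit.ofι' _ _
    (fun {R} x hx => ⟨(key R x hx).choose, (key R x hx).choose_spec⟩)⟩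

variable (hcover : ∀ A : T, ∃ (X₁ X₀ : T) (u : X₁ ⟶ X₀) (p : X₀ ⟶ A)
      (w : A ⟶ X₁⟦(1 : ℤ)⟧), Triangle.mk u p w ∈ (distTriang T) ∧
        P X₁ ∧ P X₀ ∧ XEpic P p)
  (henv : ∀ A : T, ∃ (X₀ X₁ : T) (i : A ⟶ X₀) (q : X₀ ⟶ X₁)
      (w : X₁ ⟶ A⟦(1 : ℤ)⟧), Triangle.mk i q w ∈ (distTriang T) ∧
        P X₀ ∧ P X₁ ∧ XMonic P i)
  (hb : ∀ (A B C : T) (f : A ⟶ B) (g : B ⟶ C) (h : C ⟶ A⟦(1 : ℤ)⟧),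
      Triangle.mk f g h ∈ (distTriang T) →
        (Epi ((Quotient.functor (stableRel P)).map g) → XMonic P f) ∧
        (Mono ((Quotient.functor (stableRel P)).map f) → XEpic P g))

include hcover henv hb

/-- Every morphism has a kernel in the stable quotient. -/
lemma kgen {A B : T} (f : A ⟶ B) :
    ∃ (K : T) (κ : (π).obj K ⟶ (π).obj A), Mono κ ∧ ∃ (w : κ ≫ (π).map f = 0),
      Nonempty (IsLimit (KernelFork.ofι κ w)) := by
  obtain ⟨X₁, X₀, u₀, p, wc, hTc, hX₁, hX₀, hp⟩ := hcover B
  have hfe : XEpic P (biprod.desc f p) := by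
    intro X' hX' x
    obtain ⟨t₀, ht₀⟩ := hp X' hX' x
    exact ⟨t₀ ≫ biprod.inr, by rw [Category.assoc, biprod.inr_desc, ht₀]⟩
  obtain ⟨K, κ₀, h', hTd⟩ := distinguished_cocone_triangle₁ (biprod.desc f p)
  have hπfh : (π).map (biprod.desc f p)
      = (π).map (biprod.fst : A ⊞ X₀ ⟶ A) ≫ (π).map f := pdesc_eq P hX₀ f p
  haveI hmono : Mono ((π).map κ₀) := mono_of_xepic P henv hTd hfe
  have w2 : (π).map κ₀ ≫ (π).map (biprod.desc f p) = 0 := by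
    rw [← Functor.map_comp]
    have h0 : κ₀ ≫ biprod.desc f p = 0 := comp_distTriang_mor_zero₁₂ _ hTd
    rw [h0, Functor.map_zero]
  obtain ⟨hlim⟩ := kernel_of_xepic P henv hTd hfe w2
  haveI := isIso_pfst P A X₀ hX₀
  have w3 : ((π).map κ₀ ≫ (π).map (biprod.fst : A ⊞ X₀ ⟶ A)) ≫ (π).map f = 0 := by
    rw [Category.assoc, ← hπfh]; exact w2
  refine ⟨K, (π).map κ₀ ≫ (π).map biprod.fst, mono_comp _ _, w3, ?_⟩
  have key : ∀ (W : CategoryTheory.Quotient (stableRel P)) (kk : W ⟶ (π).obj A),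
      kk ≫ (π).map f = 0 →
      ∃ l, l ≫ ((π).map κ₀ ≫ (π).map (biprod.fst : A ⊞ X₀ ⟶ A)) = kk := by
    intro W kk hkk
    have h3 : (kk ≫ (π).map (biprod.inl : A ⟶ A ⊞ X₀)) ≫ (π).map (biprod.desc f p) = 0 := by
      rw [Category.assoc, hπfh, ← Category.assoc ((π).map biprod.inl), pinl_pfst,
        Category.id_comp, hkk]
    obtain ⟨l, hl⟩ := KernelFork.IsLimit.lift' hlim (kk ≫ (π).map biprod.inl) h3
    have hl' : l ≫ (π).map κ₀ = kk ≫ (π).map biprod.inl := by simpa using hl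
    refine ⟨l, ?_⟩
    rw [← Category.assoc, hl', Category.assoc, pinl_pfst, Category.comp_id]
  exact ⟨KernelFork.IsLimit.ofι' _ _
    (fun {W} kk hkk => ⟨(key _ kk hkk).choose, (key _ kk hkk).choose_spec⟩)⟩

/-- Every epimorphism in the stable quotient is normal. -/
lemma ngen_epi {A B : T} (f : A ⟶ B) (hf : Epi ((π).map f)) :
    ∃ (K : T) (κ : (π).obj K ⟶ (π).obj A) (w : κ ≫ (π).map f = 0),
      Nonempty (IsColimit (CokernelCofork.ofπ ((π).map f) w)) := by
  obtain ⟨X₁, X₀, u₀, p, wc, hTc, hX₁, hX₀, hp⟩ := hcover B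
  have hfe : XEpic P (biprod.desc f p) := by
    intro X' hX' x
    obtain ⟨t₀, ht₀⟩ := hp X' hX' x
    exact ⟨t₀ ≫ biprod.inr, by rw [Category.assoc, biprod.inr_desc, ht₀]⟩
  obtain ⟨K, κ₀, h', hTd⟩ := distinguished_cocone_triangle₁ (biprod.desc f p)
  have hπfh : (π).map (biprod.desc f p)
      = (π).map (biprod.fst : A ⊞ X₀ ⟶ A) ≫ (π).map f := pdesc_eq P hX₀ f p
  haveI := isIso_pfst P A X₀ hX₀
  haveI hepi : Epi ((π).map (biprod.desc f p)) := by
    rw [hπfh]; exact epi_comp _ _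
  have hκmon : XMonic P κ₀ := (hb _ _ _ κ₀ (biprod.desc f p) h' hTd).1 hepi
  have w2 : (π).map κ₀ ≫ (π).map (biprod.desc f p) = 0 := by
    rw [← Functor.map_comp]
    have h0 : κ₀ ≫ biprod.desc f p = 0 := comp_distTriang_mor_zero₁₂ _ hTd
    rw [h0, Functor.map_zero]
  obtain ⟨hcolim⟩ := cokernel_of_xmonic P hcover hTd hκmon w2
  have w3 : ((π).map κ₀ ≫ (π).map (biprod.fst : A ⊞ X₀ ⟶ A)) ≫ (π).map f = 0 := by
    rw [Category.assoc, ← hπfh]; exact w2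
  refine ⟨K, (π).map κ₀ ≫ (π).map biprod.fst, w3, ?_⟩
  have hinlf : (π).map (biprod.inl : A ⟶ A ⊞ X₀) ≫ (π).map (biprod.desc f p)
      = (π).map f := by
    rw [← Functor.map_comp, biprod.inl_desc]
  have key : ∀ (W : CategoryTheory.Quotient (stableRel P)) (kk : (π).obj A ⟶ W),
      ((π).map κ₀ ≫ (π).map (biprod.fst : A ⊞ X₀ ⟶ A)) ≫ kk = 0 →
      ∃ l, (π).map f ≫ l = kk := by
    intro W kk hkk
    have h3 : (π).map κ₀ ≫ ((π).map (biprod.fst : A ⊞ X₀ ⟶ A) ≫ kk) = 0 := by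
      rw [← Category.assoc]; exact hkk
    obtain ⟨l, hl⟩ := CokernelCofork.IsColimit.desc' hcolim
      ((π).map biprod.fst ≫ kk) h3
    have hl' : (π).map (biprod.desc f p) ≫ l = (π).map biprod.fst ≫ kk := by
      simpa using hl
    refine ⟨l, ?_⟩
    rw [← hinlf, Category.assoc, hl', ← Category.assoc, pinl_pfst, Category.id_comp]
  exact ⟨CokernelCofork.IsColimit.ofπ' _ _
    (fun {W} kk hkk => ⟨(key _ kk hkk).choose, (key _ kk hkk).choose_spec⟩)⟩

/-- Every morphism has a cokernel in the stable quotient. -/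
lemma cgen {A B : T} (f : A ⟶ B) :
    ∃ (C' : T) (γ : (π).obj B ⟶ (π).obj C'), Epi γ ∧ ∃ (w : (π).map f ≫ γ = 0),
      Nonempty (IsColimit (CokernelCofork.ofπ γ w)) := by
  obtain ⟨X₀, X₁, i, q, we, hTe, hX₀, hX₁, hi⟩ := henv A
  have hfm : XMonic P (biprod.lift f i) := by
    intro X' hX' x
    obtain ⟨t₀, ht₀⟩ := hi X' hX' x
    exact ⟨biprod.snd ≫ t₀, by rw [← Category.assoc, biprod.lift_snd, ht₀]⟩
  obtain ⟨C', g, h', hTd⟩ := distinguished_cocone_triangle (biprod.lift f i)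
  have hπft : (π).map (biprod.lift f i)
      = (π).map f ≫ (π).map (biprod.inl : B ⟶ B ⊞ X₀) := plift_eq P hX₀ f i
  haveI := isIso_pinl P B X₀ hX₀
  haveI hgepi : Epi ((π).map g) := epi_of_xmonic P hcover hTd hfm
  have w2 : (π).map (biprod.lift f i) ≫ (π).map g = 0 := by
    rw [← Functor.map_comp]
    have h0 : biprod.lift f i ≫ g = 0 := comp_distTriang_mor_zero₁₂ _ hTd
    rw [h0, Functor.map_zero]
  obtain ⟨hcolim⟩ := cokernel_of_xmonic P hcover hTd hfm w2
  have w3 : (π).map f ≫ ((π).map (biprod.inl : B ⟶ B ⊞ X₀) ≫ (π).map g) = 0 := by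
    rw [← Category.assoc, ← hπft]; exact w2
  refine ⟨C', (π).map biprod.inl ≫ (π).map g, epi_comp _ _, w3, ?_⟩
  have key : ∀ (W : CategoryTheory.Quotient (stableRel P)) (kk : (π).obj B ⟶ W),
      (π).map f ≫ kk = 0 →
      ∃ l, ((π).map (biprod.inl : B ⟶ B ⊞ X₀) ≫ (π).map g) ≫ l = kk := by
    intro W kk hkk
    have h3 : (π).map (biprod.lift f i) ≫ ((π).map (biprod.fst : B ⊞ X₀ ⟶ B) ≫ kk) = 0 := by
      rw [hπft, Category.assoc, ← Category.assoc ((π).map biprod.inl), pinl_pfst,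
        Category.id_comp, hkk]
    obtain ⟨l, hl⟩ := CokernelCofork.IsColimit.desc' hcolim
      ((π).map biprod.fst ≫ kk) h3
    have hl' : (π).map g ≫ l = (π).map biprod.fst ≫ kk := by simpa using hl
    refine ⟨l, ?_⟩
    rw [Category.assoc, hl', ← Category.assoc, pinl_pfst, Category.id_comp]
  exact ⟨CokernelCofork.IsColimit.ofπ' _ _
    (fun {W} kk hkk => ⟨(key _ kk hkk).choose, (key _ kk hkk).choose_spec⟩)⟩

/-- Every monomorphism in the stable quotient is normal. -/
lemma ngen_mono {A B : T} (f : A ⟶ B) (hf : Mono ((π).map f)) :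
    ∃ (C' : T) (γ : (π).obj B ⟶ (π).obj C') (w : (π).map f ≫ γ = 0),
      Nonempty (IsLimit (KernelFork.ofι ((π).map f) w)) := by
  obtain ⟨X₀, X₁, i, q, we, hTe, hX₀, hX₁, hi⟩ := henv A
  have hfm : XMonic P (biprod.lift f i) := by
    intro X' hX' x
    obtain ⟨t₀, ht₀⟩ := hi X' hX' x
    exact ⟨biprod.snd ≫ t₀, by rw [← Category.assoc, biprod.lift_snd, ht₀]⟩
  obtain ⟨C', g, h', hTd⟩ := distinguished_cocone_triangle (biprod.lift f i)
  have hπft : (π).map (biprod.lift f i)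
      = (π).map f ≫ (π).map (biprod.inl : B ⟶ B ⊞ X₀) := plift_eq P hX₀ f i
  haveI := isIso_pinl P B X₀ hX₀
  haveI hftm : Mono ((π).map (biprod.lift f i)) := by
    rw [hπft]; exact mono_comp _ _
  have hgepic : XEpic P g := (hb _ _ _ (biprod.lift f i) g h' hTd).2 hftm
  have w2 : (π).map (biprod.lift f i) ≫ (π).map g = 0 := by
    rw [← Functor.map_comp]
    have h0 : biprod.lift f i ≫ g = 0 := comp_distTriang_mor_zero₁₂ _ hTd
    rw [h0, Functor.map_zero]
  obtain ⟨hlim⟩ := kernel_of_xepic P henv hTd hgepic w2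
  have w3 : (π).map f ≫ ((π).map (biprod.inl : B ⟶ B ⊞ X₀) ≫ (π).map g) = 0 := by
    rw [← Category.assoc, ← hπft]; exact w2
  refine ⟨C', (π).map biprod.inl ≫ (π).map g, w3, ?_⟩
  have hftfst : (π).map (biprod.lift f i) ≫ (π).map (biprod.fst : B ⊞ X₀ ⟶ B)
      = (π).map f := by
    rw [← Functor.map_comp, biprod.lift_fst]
  have key : ∀ (W : CategoryTheory.Quotient (stableRel P)) (kk : W ⟶ (π).obj B),
      kk ≫ ((π).map (biprod.inl : B ⟶ B ⊞ X₀) ≫ (π).map g) = 0 →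
      ∃ l, l ≫ (π).map f = kk := by
    intro W kk hkk
    have h3 : (kk ≫ (π).map (biprod.inl : B ⟶ B ⊞ X₀)) ≫ (π).map g = 0 := by
      rw [Category.assoc]; exact hkk
    obtain ⟨l, hl⟩ := KernelFork.IsLimit.lift' hlim (kk ≫ (π).map biprod.inl) h3
    have hl' : l ≫ (π).map (biprod.lift f i) = kk ≫ (π).map biprod.inl := by
      simpa using hl
    refine ⟨l, ?_⟩
    rw [← hftfst, ← Category.assoc, hl', Category.assoc, pinl_pfst, Category.comp_id]
  exact ⟨KernelFork.IsLimit.ofι' _ _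
    (fun {W} kk hkk => ⟨(key _ kk hkk).choose, (key _ kk hkk).choose_spec⟩)⟩

end QT

end Stmt15


theorem stmt_15 {T : Type u} [Category.{v} T] [Preadditive T] [HasZeroObject T]
    [HasShift T ℤ] [∀ n : ℤ, (shiftFunctor T n).Additive] [Pretriangulated T]
    [HasBinaryBiproducts T]
    (P : T → Prop) (hne : ∃ Z, P Z)
    (hsum : ∀ X Y : T, P X → P Y → P (X ⊞ Y))
    -- condition (a), precovers:
    (hcover : ∀ A : T, ∃ (X₁ X₀ : T) (u : X₁ ⟶ X₀) (p : X₀ ⟶ A)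
      (w : A ⟶ X₁⟦(1 : ℤ)⟧), Triangle.mk u p w ∈ (distTriang T) ∧
        P X₁ ∧ P X₀ ∧ XEpic P p)
    -- condition (a), preenvelopes:
    (henv : ∀ A : T, ∃ (X₀ X₁ : T) (i : A ⟶ X₀) (q : X₀ ⟶ X₁)
      (w : X₁ ⟶ A⟦(1 : ℤ)⟧), Triangle.mk i q w ∈ (distTriang T) ∧
        P X₀ ∧ P X₁ ∧ XMonic P i)
    -- condition (b):
    (hb : ∀ (A B C : T) (f : A ⟶ B) (g : B ⟶ C) (h : C ⟶ A⟦(1 : ℤ)⟧),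
      Triangle.mk f g h ∈ (distTriang T) →
        (Epi ((Quotient.functor (stableRel P)).map g) → XMonic P f) ∧
        (Mono ((Quotient.functor (stableRel P)).map f) → XEpic P g)) :
    Nonempty ((inst : Abelian (Quotient (stableRel P))) ×'
      @Functor.Additive T (Quotient (stableRel P)) _ _ _ inst.toPreadditive
        (Quotient.functor (stableRel P))) := by
  haveI hcong : Congruence (stableRel P) := Stmt15.qcong hne hsum
  letI ipre : Preadditive (CategoryTheory.Quotient (stableRel P)) := Stmt15.qadd hne hsum
  haveI hAdd : (Quotient.functor (stableRel P)).Additive := { map_add := rfl }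
  -- zero object
  haveI hz : HasZeroObject (CategoryTheory.Quotient (stableRel P)) := by
    obtain ⟨Z0, hZ0⟩ := HasZeroObject.zero (C := T)
    refine ⟨(Quotient.functor (stableRel P)).obj Z0, ?_⟩
    rw [IsZero.iff_id_eq_zero, ← (Quotient.functor (stableRel P)).map_id,
      hZ0.eq_of_src (𝟙 Z0) 0, Functor.map_zero]
  -- binary biproducts
  haveI hbb : HasBinaryBiproducts (CategoryTheory.Quotient (stableRel P)) := by
    refine ⟨fun X Y => HasBinaryBiproduct.mk ?_⟩
    refine
      { bicone :=
          { pt := (Quotient.functor (stableRel P)).obj (X.as ⊞ Y.as)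
            fst := (Quotient.functor (stableRel P)).map biprod.fst
            snd := (Quotient.functor (stableRel P)).map biprod.snd
            inl := (Quotient.functor (stableRel P)).map biprod.inl
            inr := (Quotient.functor (stableRel P)).map biprod.inr
            inl_fst := by
              rw [← Functor.map_comp, biprod.inl_fst, CategoryTheory.Functor.map_id]
              rfl
            inl_snd := by
              rw [← Functor.map_comp, biprod.inl_snd, Functor.map_zero]
            inr_fst := by
              rw [← Functor.map_comp, biprod.inr_fst, Functor.map_zero]
            inr_snd := by
              rw [← Functor.map_comp, biprod.inr_snd, CategoryTheory.Functor.map_id]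
              rfl }
        isBilimit := isBinaryBilimitOfTotal _ ?_ }
    dsimp only
    rw [← Functor.map_comp (Quotient.functor (stableRel P)) (biprod.fst : X.as ⊞ Y.as ⟶ X.as) biprod.inl,
      ← Functor.map_comp (Quotient.functor (stableRel P)) (biprod.snd : X.as ⊞ Y.as ⟶ Y.as) biprod.inr,
      ← Functor.map_add, biprod.total,
      CategoryTheory.Functor.map_id]
  haveI hterm : HasTerminal (CategoryTheory.Quotient (stableRel P)) := inferInstance
  haveI hbp : HasBinaryProducts (CategoryTheory.Quotient (stableRel P)) := inferInstance
  haveI hfp : HasFiniteProducts (CategoryTheory.Quotient (stableRel P)) :=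
    hasFiniteProducts_of_has_binary_and_terminal
  -- kernels and cokernels
  haveI hker : HasKernels (CategoryTheory.Quotient (stableRel P)) := by
    refine ⟨fun {X Y} φ => ?_⟩
    obtain ⟨f, rfl⟩ :=
      (Quotient.functor (stableRel P)).map_surjective (X := X.as) (Y := Y.as) φ
    obtain ⟨K, κ, hκm, w, ⟨hlim⟩⟩ := Stmt15.kgen P hcover henv hb f
    exact HasLimit.mk ⟨_, hlim⟩
  haveI hcoker : HasCokernels (CategoryTheory.Quotient (stableRel P)) := by
    refine ⟨fun {X Y} φ => ?_⟩
    obtain ⟨f, rfl⟩ :=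
      (Quotient.functor (stableRel P)).map_surjective (X := X.as) (Y := Y.as) φ
    obtain ⟨C', γ, hγe, w, ⟨hcolim⟩⟩ := Stmt15.cgen P hcover henv hb f
    exact HasColimit.mk ⟨_, hcolim⟩
  -- normality
  have hnm : ∀ {X Y : CategoryTheory.Quotient (stableRel P)} (φ : X ⟶ Y),
      Mono φ → Nonempty (NormalMono φ) := by
    intro X Y φ hm
    obtain ⟨f, rfl⟩ :=
      (Quotient.functor (stableRel P)).map_surjective (X := X.as) (Y := Y.as) φ
    obtain ⟨C', γ, w, ⟨hlim⟩⟩ := Stmt15.ngen_mono P hcover henv hb f hm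
    exact ⟨⟨_, γ, w, hlim⟩⟩
  have hnep : ∀ {X Y : CategoryTheory.Quotient (stableRel P)} (φ : X ⟶ Y),
      Epi φ → Nonempty (NormalEpi φ) := by
    intro X Y φ he
    obtain ⟨f, rfl⟩ :=
      (Quotient.functor (stableRel P)).map_surjective (X := X.as) (Y := Y.as) φ
    obtain ⟨K, κ, w, ⟨hcolim⟩⟩ := Stmt15.ngen_epi P hcover henv hb f he
    exact ⟨⟨_, κ, w, hcolim⟩⟩
  letI inst : Abelian (CategoryTheory.Quotient (stableRel P)) :=
    { toPreadditive := ipre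
      normalMonoOfMono := fun f hf => hnm f hf
      normalEpiOfEpi := fun f hf => hnep f hf }
  exact ⟨⟨inst, hAdd⟩⟩
end
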